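/- For any real θ > 0 and positive integer n, θ{log(1+n/θ) - 2 + 3θ/(n+θ) - θ²/(n+θ)²} + n/(2(n+θ)) - 3 ≤ ∑_{i=1}^n p_i(1-p_i)(1-2p_i) ≤ θ{log(1+n/θ) - 2 + 3θ/(n+θ) - θ²/(n+θ)²} + 2 + n/(n+θ), where p_i = θ/(θ+i-1). -/

import Mathlib

open Real Finset

lemma log_diff_le' (a : ℝ) (ha : 0 < a) : Real.log (a+1) - Real.log a ≤ 1/a := by
  have h := Real.log_le_sub_one_of_pos (x := (a+1)/a) (by positivity)
  rw [Real.log_div (by positivity) ha.ne'] at h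
  have : (a+1)/a - 1 = 1/a := by field_simp; ring
  linarith

lemma le_log_diff' (a : ℝ) (ha : 0 < a) : 1/(a+1) ≤ Real.log (a+1) - Real.log a := by
  have h := Real.log_le_sub_one_of_pos (x := a/(a+1)) (by positivity)
  rw [Real.log_div ha.ne' (by positivity)] at h
  have : a/(a+1) - 1 = -(1/(a+1)) := by field_simp; ring
  linarith

lemma shift_sum' (f : ℕ → ℝ) (n : ℕ) : ∑ i ∈ range n, f (i+1) = ∑ i ∈ range n, f i + f n - f 0 := by
  have h1 := Finset.sum_range_succ' f n
  have h2 := Finset.sum_range_succ f n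
  linarith

set_option maxHeartbeats 1000000 in
theorem stmt_13 (θ : ℝ) (hθ : 0 < θ) (n : ℕ) (hn : 1 ≤ n) :
    θ * (Real.log (1 + n / θ) - 2 + 3 * θ / (n + θ) - θ ^ 2 / (n + θ) ^ 2)
        + n / (2 * (n + θ)) - 3 ≤
      ∑ i ∈ Finset.range n, θ / (θ + i) * (1 - θ / (θ + i)) * (1 - 2 * (θ / (θ + i))) ∧
    ∑ i ∈ Finset.range n, θ / (θ + i) * (1 - θ / (θ + i)) * (1 - 2 * (θ / (θ + i))) ≤
      θ * (Real.log (1 + n / θ) - 2 + 3 * θ / (n + θ) - θ ^ 2 / (n + θ) ^ 2)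
        + 2 + n / (n + θ) := by
  have hx : ∀ i : ℕ, (0:ℝ) < θ + i := fun i => by positivity
  have hxn : (0:ℝ) < θ + n := hx n
  -- decompose the summand
  have hdecomp : ∑ i ∈ Finset.range n, θ / (θ + i) * (1 - θ / (θ + i)) * (1 - 2 * (θ / (θ + i)))
      = (∑ i ∈ range n, θ/(θ+(i:ℝ))) - 3 * (∑ i ∈ range n, θ^2/(θ+(i:ℝ))^2)
        + 2 * (∑ i ∈ range n, θ^3/(θ+(i:ℝ))^3) := by
    rw [Finset.mul_sum, Finset.mul_sum, ← Finset.sum_sub_distrib, ← Finset.sum_add_distrib]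
    refine Finset.sum_congr rfl fun i _ => ?_
    have ha := (hx i).ne'
    field_simp
    ring
  -- telescoping identities
  have tel1 : ∑ i ∈ range n, (θ * Real.log (θ+(i:ℝ)+1) - θ * Real.log (θ+(i:ℝ)))
      = θ * (Real.log (θ+(n:ℝ)) - Real.log θ) := by
    have h := Finset.sum_range_sub (f := fun i : ℕ => θ * Real.log (θ + (i:ℝ))) n
    push_cast at h
    rw [show θ+(0:ℝ) = θ from add_zero θ] at h
    rw [mul_sub, ← h]
    refine Finset.sum_congr rfl fun i _ => by ring_nf
  have tel2 : ∑ i ∈ range n, (θ^2/(θ+(i:ℝ)) - θ^2/(θ+(i:ℝ)+1)) = θ - θ^2/(θ+(n:ℝ)) := by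
    have h := Finset.sum_range_sub' (f := fun i : ℕ => θ^2 / (θ + (i:ℝ))) n
    push_cast at h
    rw [show θ^2/(θ+(0:ℝ)) = θ from by field_simp; ring] at h
    rw [← h]
    refine Finset.sum_congr rfl fun i _ => by ring_nf
  have tel3 : ∑ i ∈ range n, (θ^3/2 * (1/(θ+(i:ℝ))^2 - 1/(θ+(i:ℝ)+1)^2))
      = θ/2 - θ^3/(2*(θ+(n:ℝ))^2) := by
    have h := Finset.sum_range_sub' (f := fun i : ℕ => θ^3/2 * (1 / (θ + (i:ℝ))^2)) n
    push_cast at h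
    rw [show θ^3/2 * (1/(θ+(0:ℝ))^2) = θ/2 from by field_simp; ring,
        show θ^3/2 * (1/(θ+(n:ℝ))^2) = θ^3/(2*(θ+(n:ℝ))^2) from by
          rw [mul_one_div, div_div]] at h
    rw [← h]
    refine Finset.sum_congr rfl fun i _ => by rw [mul_sub]; ring_nf
  have tel4 : ∑ i ∈ range n, (θ^3/(θ+(i:ℝ))^3 - θ^3/(θ+(i:ℝ)+1)^3)
      = 1 - θ^3/(θ+(n:ℝ))^3 := by
    have h := Finset.sum_range_sub' (f := fun i : ℕ => θ^3 / (θ + (i:ℝ))^3) n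
    push_cast at h
    rw [show θ^3/(θ+(0:ℝ))^3 = 1 from by rw [add_zero]; exact div_self (by positivity)] at h
    rw [← h]
    refine Finset.sum_congr rfl fun i _ => by ring_nf
  -- shift identities
  have shift1 : ∑ i ∈ range n, θ/(θ+(i:ℝ)+1)
      = (∑ i ∈ range n, θ/(θ+(i:ℝ))) + θ/(θ+(n:ℝ)) - 1 := by
    have h := shift_sum' (fun i : ℕ => θ / (θ + (i:ℝ))) n
    push_cast at h
    rw [show θ/(θ+(0:ℝ)) = 1 from by rw [add_zero]; exact div_self hθ.ne'] at h
    rw [← h]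
    refine Finset.sum_congr rfl fun i _ => by ring_nf
  have shift2 : ∑ i ∈ range n, θ^2/(θ+(i:ℝ)+1)^2
      = (∑ i ∈ range n, θ^2/(θ+(i:ℝ))^2) + θ^2/(θ+(n:ℝ))^2 - 1 := by
    have h := shift_sum' (fun i : ℕ => θ^2 / (θ + (i:ℝ))^2) n
    push_cast at h
    rw [show θ^2/(θ+(0:ℝ))^2 = 1 from by rw [add_zero]; exact div_self (by positivity)] at h
    rw [← h]
    refine Finset.sum_congr rfl fun i _ => by ring_nf
  have shift3 : ∑ i ∈ range n, θ^3/(θ+(i:ℝ)+1)^3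
      = (∑ i ∈ range n, θ^3/(θ+(i:ℝ))^3) + θ^3/(θ+(n:ℝ))^3 - 1 := by
    have h := shift_sum' (fun i : ℕ => θ^3 / (θ + (i:ℝ))^3) n
    push_cast at h
    rw [show θ^3/(θ+(0:ℝ))^3 = 1 from by rw [add_zero]; exact div_self (by positivity)] at h
    rw [← h]
    refine Finset.sum_congr rfl fun i _ => by ring_nf
  -- six bounds
  have hA_lo : θ * (Real.log (θ+(n:ℝ)) - Real.log θ) ≤ ∑ i ∈ range n, θ/(θ+(i:ℝ)) := by
    rw [← tel1]
    refine Finset.sum_le_sum fun i _ => ?_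
    have ha := hx i
    have h := log_diff_le' (θ+(i:ℝ)) ha
    have h2 := mul_le_mul_of_nonneg_left h hθ.le
    rw [mul_one_div] at h2
    linarith [h2]
  have hA_hi : (∑ i ∈ range n, θ/(θ+(i:ℝ))) + θ/(θ+(n:ℝ)) - 1
      ≤ θ * (Real.log (θ+(n:ℝ)) - Real.log θ) := by
    rw [← shift1, ← tel1]
    refine Finset.sum_le_sum fun i _ => ?_
    have ha := hx i
    have h := le_log_diff' (θ+(i:ℝ)) ha
    have h2 := mul_le_mul_of_nonneg_left h hθ.le
    rw [mul_one_div] at h2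
    linarith [h2]
  have hB_lo : θ - θ^2/(θ+(n:ℝ)) ≤ ∑ i ∈ range n, θ^2/(θ+(i:ℝ))^2 := by
    rw [← tel2]
    refine Finset.sum_le_sum fun i _ => ?_
    have ha := hx i
    rw [← sub_nonneg, show θ^2/(θ+(i:ℝ))^2 - (θ^2/(θ+(i:ℝ)) - θ^2/(θ+(i:ℝ)+1))
        = θ^2/((θ+(i:ℝ))^2*(θ+(i:ℝ)+1)) from by field_simp; ring]
    positivity
  have hB_hi : (∑ i ∈ range n, θ^2/(θ+(i:ℝ))^2) + θ^2/(θ+(n:ℝ))^2 - 1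
      ≤ θ - θ^2/(θ+(n:ℝ)) := by
    rw [← shift2, ← tel2]
    refine Finset.sum_le_sum fun i _ => ?_
    have ha := hx i
    rw [← sub_nonneg, show (θ^2/(θ+(i:ℝ)) - θ^2/(θ+(i:ℝ)+1)) - θ^2/(θ+(i:ℝ)+1)^2
        = θ^2/((θ+(i:ℝ))*(θ+(i:ℝ)+1)^2) from by field_simp; ring]
    positivity
  have hC_hi : (∑ i ∈ range n, θ^3/(θ+(i:ℝ))^3) + θ^3/(θ+(n:ℝ))^3 - 1
      ≤ θ/2 - θ^3/(2*(θ+(n:ℝ))^2) := by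
    rw [← shift3, ← tel3]
    refine Finset.sum_le_sum fun i _ => ?_
    have ha := hx i
    rw [← sub_nonneg, show θ^3/2 * (1/(θ+(i:ℝ))^2 - 1/(θ+(i:ℝ)+1)^2) - θ^3/(θ+(i:ℝ)+1)^3
        = θ^3*(3*(θ+(i:ℝ))+1)/(2*(θ+(i:ℝ))^2*(θ+(i:ℝ)+1)^3) from by field_simp; ring]
    positivity
  have hC_lo : (θ/2 - θ^3/(2*(θ+(n:ℝ))^2)) + (1 - θ^3/(θ+(n:ℝ))^3)/2
      ≤ ∑ i ∈ range n, θ^3/(θ+(i:ℝ))^3 := by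
    rw [← tel3, ← tel4, Finset.sum_div, ← Finset.sum_add_distrib]
    refine Finset.sum_le_sum fun i _ => ?_
    have ha := hx i
    rw [← sub_nonneg, show θ^3/(θ+(i:ℝ))^3 - (θ^3/2 * (1/(θ+(i:ℝ))^2 - 1/(θ+(i:ℝ)+1)^2)
          + (θ^3/(θ+(i:ℝ))^3 - θ^3/(θ+(i:ℝ)+1)^3)/2)
        = θ^3*(2*(θ+(i:ℝ))+1)/(2*(θ+(i:ℝ))^3*(θ+(i:ℝ)+1)^3) from by field_simp; ring]
    positivity
  -- main term identity
  have hlog : Real.log (1 + (n:ℝ)/θ) = Real.log (θ + n) - Real.log θ := by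
    rw [show (1:ℝ) + (n:ℝ)/θ = (θ + n)/θ from by field_simp,
      Real.log_div hxn.ne' hθ.ne']
  have hI : θ * (Real.log (1 + (n:ℝ) / θ) - 2 + 3 * θ / ((n:ℝ) + θ) - θ ^ 2 / ((n:ℝ) + θ) ^ 2)
      = θ * (Real.log (θ+(n:ℝ)) - Real.log θ) - 3*(θ - θ^2/(θ+(n:ℝ)))
        + 2*(θ/2 - θ^3/(2*(θ+(n:ℝ))^2)) := by
    rw [hlog, show (n:ℝ) + θ = θ + n from by ring]
    field_simp
    ring
  -- auxiliary facts
  have hg1le : θ/(θ+(n:ℝ)) ≤ 1 := by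
    rw [div_le_one hxn]; linarith [Nat.cast_nonneg (α := ℝ) n]
  have hg3nn : (0:ℝ) ≤ θ^3/(θ+(n:ℝ))^3 := by positivity
  have hg23 : θ^3/(θ+(n:ℝ))^3 ≤ θ^2/(θ+(n:ℝ))^2 := by
    have h : θ^2/(θ+(n:ℝ))^2 - θ^3/(θ+(n:ℝ))^3 = θ^2*(n:ℝ)/(θ+(n:ℝ))^3 := by
      field_simp; ring
    have h2 : (0:ℝ) ≤ θ^2*(n:ℝ)/(θ+(n:ℝ))^3 := by positivity
    linarith
  have hng : (n:ℝ)/(2*((n:ℝ)+θ)) ≤ 1/2 := by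
    rw [div_le_iff₀ (by positivity)]
    linarith
  have hng2 : (n:ℝ)/((n:ℝ)+θ) = 1 - θ/(θ+(n:ℝ)) := by
    rw [eq_sub_iff_add_eq, show (n:ℝ)+θ = θ+(n:ℝ) from by ring, ← add_div,
      div_eq_one_iff_eq hxn.ne']
    ring
  rw [hdecomp]
  constructor
  · rw [hI]; linarith
  · rw [hI, hng2]; linarith
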